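/- Limit claim for the diagonal entry (first claim in the proof of Proposition 3.1): fix a meeting function ρ, a network g ∈ S, a coordinate e* ∈ E, and set w = flip e* g. Let (Fₙ) be a sequence of acceptance functions (each satisfying the parameter constraints), and write Πₙ = Π(ρ, Fₙ). Assume that as n → ∞: Fₙ w e → 0 for every e ∈ E (in particular Fₙ g e* = 1 − Fₙ w e* → 1), and Fₙ g e → 0 for every e ≠ e*. Then for every natural number τ, the diagonal entry ((Πₙ)^τ) g g converges to (1 − ρ e* g)^τ as n → ∞. -/
import Mathlib


open Matrix Finset Filter

set_option linter.unusedSectionVars false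

/-- Flip the link `e` in network `g`. -/
def flipL {E : Type*} [DecidableEq E] (e : E) (g : E → Bool) : E → Bool :=
  Function.update g e (!(g e))

/-- The one-step transition matrix of the network formation game. -/
noncomputable def netPi {E : Type*} [DecidableEq E] [Fintype E]
    (ρ : E → (E → Bool) → ℝ) (F : (E → Bool) → E → ℝ) :
    Matrix (E → Bool) (E → Bool) ℝ :=
  Matrix.of fun g w =>
    if g = w then ∑ e, ρ e g * (1 - F g e)
    else ∑ e, if w = flipL e g then ρ e g * F g e else 0

/-- A meeting function: strictly positive selection probabilities summing to one. -/
def IsMeeting {E : Type*} [Fintype E] (ρ : E → (E → Bool) → ℝ) : Prop :=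
  (∀ e g, 0 < ρ e g) ∧ ∀ g, ∑ e, ρ e g = 1

/-- An acceptance function: probabilities strictly between 0 and 1, complementary under flips. -/
def IsAcceptance {E : Type*} [DecidableEq E] (F : (E → Bool) → E → ℝ) : Prop :=
  (∀ g e, 0 < F g e ∧ F g e < 1) ∧ ∀ g e, F g e + F (flipL e g) e = 1

section aux
variable {E : Type*} [DecidableEq E] [Fintype E]

lemma flipL_ne (e : E) (g : E → Bool) : flipL e g ≠ g := fun h => by
  have := congrFun h e; simp [flipL] at this

lemma flipL_flipL (e : E) (g : E → Bool) : flipL e (flipL e g) = g := by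
  funext x
  by_cases h : x = e
  · subst h; simp [flipL]
  · simp [flipL, Function.update_of_ne h]

lemma flipL_inj {e e' : E} {g : E → Bool} (h : flipL e g = flipL e' g) : e = e' := by
  by_contra hne
  have h1 := congrFun h e
  have h2 : flipL e' g e = g e := by
    simp [flipL, Function.update_of_ne hne]
  rw [h2] at h1
  simp [flipL] at h1

lemma netPi_diag (ρ : E → (E → Bool) → ℝ) (F : (E → Bool) → E → ℝ) (g : E → Bool) :
    netPi ρ F g g = ∑ e, ρ e g * (1 - F g e) := by simp [netPi]

lemma netPi_flip (ρ : E → (E → Bool) → ℝ) (F : (E → Bool) → E → ℝ) (g : E → Bool) (e : E) :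
    netPi ρ F g (flipL e g) = ρ e g * F g e := by
  unfold netPi
  rw [Matrix.of_apply, if_neg (Ne.symm (flipL_ne e g))]
  rw [Finset.sum_eq_single e]
  · simp
  · intro e' _ hne
    rw [if_neg]
    exact fun h => hne (flipL_inj h).symm
  · simp

lemma netPi_nonneg {ρ : E → (E → Bool) → ℝ} (hρ : IsMeeting ρ)
    {F : (E → Bool) → E → ℝ} (hF : IsAcceptance F) (x y : E → Bool) :
    0 ≤ netPi ρ F x y := by
  unfold netPi
  rw [Matrix.of_apply]
  split
  · exact Finset.sum_nonneg fun e _ =>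
      mul_nonneg (hρ.1 e x).le (by linarith [(hF.1 x e).2])
  · refine Finset.sum_nonneg fun e _ => ?_
    split
    · exact mul_nonneg (hρ.1 e x).le (hF.1 x e).1.le
    · exact le_refl 0

lemma netPi_row_sum {ρ : E → (E → Bool) → ℝ} (hρ : IsMeeting ρ)
    (F : (E → Bool) → E → ℝ) (g : E → Bool) :
    ∑ y, netPi ρ F g y = 1 := by
  have key : ∀ y, netPi ρ F g y
      = (if g = y then ∑ e, ρ e g * (1 - F g e) else 0)
        + ∑ e, if y = flipL e g then ρ e g * F g e else 0 := by
    intro y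
    unfold netPi
    rw [Matrix.of_apply]
    split
    · next h =>
      subst h
      have : (∑ e, if g = flipL e g then ρ e g * F g e else 0) = 0 :=
        Finset.sum_eq_zero fun e _ => if_neg (Ne.symm (flipL_ne e g))
      rw [this]; ring
    · rw [zero_add]
  rw [Finset.sum_congr rfl fun y _ => key y, Finset.sum_add_distrib]
  rw [Finset.sum_ite_eq Finset.univ g fun _ => ∑ e, ρ e g * (1 - F g e)]
  rw [Finset.sum_comm]
  have : ∀ e : E, (∑ y, if y = flipL e g then ρ e g * F g e else 0) = ρ e g * F g e := by
    intro e
    rw [Finset.sum_ite_eq' Finset.univ (flipL e g) fun _ => ρ e g * F g e]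
    simp
  rw [Finset.sum_congr rfl fun e _ => this e]
  simp only [Finset.mem_univ, if_pos]
  rw [← Finset.sum_add_distrib]
  have : ∀ e : E, ρ e g * (1 - F g e) + ρ e g * F g e = ρ e g := fun e => by ring
  rw [Finset.sum_congr rfl fun e _ => this e, hρ.2 g]

lemma pow_row_sum {ρ : E → (E → Bool) → ℝ} (hρ : IsMeeting ρ)
    (F : (E → Bool) → E → ℝ) (τ : ℕ) :
    ∀ x : E → Bool, ∑ y, (netPi ρ F ^ τ) x y = 1 := by
  induction τ with
  | zero => intro x; simp [Matrix.one_apply]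
  | succ τ ih =>
    intro x
    rw [pow_succ']
    simp only [Matrix.mul_apply]
    rw [Finset.sum_comm]
    have : ∀ z, (∑ y, netPi ρ F x z * (netPi ρ F ^ τ) z y) = netPi ρ F x z := by
      intro z
      rw [← Finset.mul_sum, ih z, mul_one]
    rw [Finset.sum_congr rfl fun z _ => this z, netPi_row_sum hρ]

lemma netPow_nonneg {ρ : E → (E → Bool) → ℝ} (hρ : IsMeeting ρ)
    {F : (E → Bool) → E → ℝ} (hF : IsAcceptance F) (τ : ℕ) (x y : E → Bool) :
    0 ≤ (netPi ρ F ^ τ) x y := by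
  induction τ generalizing x y with
  | zero => simp [Matrix.one_apply]; split <;> norm_num
  | succ τ ih =>
    rw [pow_succ', Matrix.mul_apply]
    exact Finset.sum_nonneg fun z _ => mul_nonneg (netPi_nonneg hρ hF x z) (ih z y)

lemma netPow_le_one {ρ : E → (E → Bool) → ℝ} (hρ : IsMeeting ρ)
    {F : (E → Bool) → E → ℝ} (hF : IsAcceptance F) (τ : ℕ) (x y : E → Bool) :
    (netPi ρ F ^ τ) x y ≤ 1 := by
  rw [← pow_row_sum hρ F τ x]
  exact Finset.single_le_sum (fun z _ => netPow_nonneg hρ hF τ x z) (Finset.mem_univ y)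

end aux

/-- Limit claim for the diagonal entry (first claim in the proof of Proposition 3.1):
in the limit where all acceptance probabilities out of `w = flipL e* g` vanish and all
acceptance probabilities out of `g` except at `e*` vanish, `(Π^τ) g g → (1 - ρ e* g)^τ`. -/
theorem diagonal_limit {E : Type*} [DecidableEq E] [Fintype E] [Nonempty E]
    (ρ : E → (E → Bool) → ℝ) (hρ : IsMeeting ρ)
    (g : E → Bool) (estar : E)
    (F : ℕ → (E → Bool) → E → ℝ) (hF : ∀ n, IsAcceptance (F n))
    (hw : ∀ e : E, Tendsto (fun n => F n (flipL estar g) e) atTop (nhds 0))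
    (hg : ∀ e : E, e ≠ estar → Tendsto (fun n => F n g e) atTop (nhds 0)) :
    ∀ τ : ℕ,
      Tendsto (fun n => (netPi ρ (F n) ^ τ) g g) atTop (nhds ((1 - ρ estar g) ^ τ)) := by
  set w : E → Bool := flipL estar g with hwdef
  set r : ℝ := ρ estar g with hrdef
  set P : ℕ → Matrix (E → Bool) (E → Bool) ℝ := fun n => netPi ρ (F n) with hPdef
  have hgw : g ≠ w := Ne.symm (flipL_ne estar g)
  have hcomp : ∀ n, F n g estar = 1 - F n w estar := by
    intro n
    have := (hF n).2 g estar
    linarith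
  -- limits of the one-step entries
  have hFg : Tendsto (fun n => F n g estar) atTop (nhds 1) := by
    have : Tendsto (fun n => 1 - F n w estar) atTop (nhds (1 - 0)) :=
      tendsto_const_nhds.sub (hw estar)
    simpa [hcomp] using this
  have hPgg : Tendsto (fun n => P n g g) atTop (nhds (1 - r)) := by
    have heach : ∀ e ∈ Finset.univ (α := E),
        Tendsto (fun n => ρ e g * (1 - F n g e)) atTop
          (nhds (if e = estar then 0 else ρ e g)) := by
      intro e _
      by_cases he : e = estar
      · subst he
        rw [if_pos rfl]
        have : Tendsto (fun n => ρ e g * (1 - F n g e)) atTop (nhds (ρ e g * (1 - 1))) :=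
          (tendsto_const_nhds.sub hFg).const_mul _
        simpa using this
      · rw [if_neg he]
        have : Tendsto (fun n => ρ e g * (1 - F n g e)) atTop (nhds (ρ e g * (1 - 0))) :=
          (tendsto_const_nhds.sub (hg e he)).const_mul _
        simpa using this
    have hsum := tendsto_finset_sum Finset.univ heach
    have hval : (∑ e, if e = estar then (0 : ℝ) else ρ e g) = 1 - r := by
      have : ∀ e : E, (if e = estar then (0 : ℝ) else ρ e g)
          = ρ e g - (if e = estar then ρ e g else 0) := by
        intro e; split <;> ring
      rw [Finset.sum_congr rfl fun e _ => this e, Finset.sum_sub_distrib, hρ.2 g,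
        Finset.sum_ite_eq' Finset.univ estar (fun e => ρ e g)]
      simp [hrdef]
    rw [hval] at hsum
    have : (fun n => P n g g) = fun n => ∑ e, ρ e g * (1 - F n g e) := by
      funext n; exact netPi_diag ρ (F n) g
    rw [this]
    exact hsum
  have hPgw : Tendsto (fun n => P n g w) atTop (nhds r) := by
    have : (fun n => P n g w) = fun n => ρ estar g * F n g estar := by
      funext n; exact netPi_flip ρ (F n) g estar
    rw [this]
    have h2 : Tendsto (fun n => ρ estar g * F n g estar) atTop (nhds (ρ estar g * 1)) :=
      hFg.const_mul _
    simpa using h2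
  have hgfw : flipL estar w = g := flipL_flipL estar g
  have hPwg : Tendsto (fun n => P n w g) atTop (nhds 0) := by
    have : (fun n => P n w g) = fun n => ρ estar w * F n w estar := by
      funext n
      rw [← hgfw]
      exact netPi_flip ρ (F n) w estar
    rw [this]
    simpa using (hw estar).const_mul (ρ estar w)
  have hPww : Tendsto (fun n => P n w w) atTop (nhds 1) := by
    have heach : ∀ e ∈ Finset.univ (α := E),
        Tendsto (fun n => ρ e w * (1 - F n w e)) atTop (nhds (ρ e w)) := by
      intro e _
      have : Tendsto (fun n => ρ e w * (1 - F n w e)) atTop (nhds (ρ e w * (1 - 0))) :=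
        (tendsto_const_nhds.sub (hw e)).const_mul _
      simpa using this
    have hsum := tendsto_finset_sum Finset.univ heach
    rw [hρ.2 w] at hsum
    have : (fun n => P n w w) = fun n => ∑ e, ρ e w * (1 - F n w e) := by
      funext n; exact netPi_diag ρ (F n) w
    rw [this]
    exact hsum
  -- sandwich bounds
  have hpair : ({g, w} : Finset (E → Bool)) ⊆ Finset.univ := Finset.subset_univ _
  have hbounds : ∀ (τ : ℕ) (x : E → Bool) (n : ℕ),
      P n x g * (P n ^ τ) g g + P n x w * (P n ^ τ) w g ≤ (P n ^ (τ + 1)) x g ∧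
      (P n ^ (τ + 1)) x g ≤ P n x g * (P n ^ τ) g g + P n x w * (P n ^ τ) w g
        + (1 - (P n x g + P n x w)) := by
    intro τ x n
    have hnn : ∀ z : E → Bool, 0 ≤ P n x z * (P n ^ τ) z g := fun z =>
      mul_nonneg (netPi_nonneg hρ (hF n) x z) (netPow_nonneg hρ (hF n) τ z g)
    have hexp : (P n ^ (τ + 1)) x g = ∑ z, P n x z * (P n ^ τ) z g := by
      rw [pow_succ', Matrix.mul_apply]
    have hpairsum : (∑ z ∈ ({g, w} : Finset (E → Bool)), P n x z * (P n ^ τ) z g)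
        = P n x g * (P n ^ τ) g g + P n x w * (P n ^ τ) w g :=
      Finset.sum_pair hgw
    constructor
    · rw [hexp, ← hpairsum]
      exact Finset.sum_le_sum_of_subset_of_nonneg hpair fun z _ _ => hnn z
    · rw [hexp, ← Finset.sum_sdiff hpair, hpairsum]
      have h1 : (∑ z ∈ Finset.univ \ ({g, w} : Finset (E → Bool)), P n x z * (P n ^ τ) z g)
          ≤ ∑ z ∈ Finset.univ \ ({g, w} : Finset (E → Bool)), P n x z := by
        refine Finset.sum_le_sum fun z _ => ?_
        exact mul_le_of_le_one_right (netPi_nonneg hρ (hF n) x z)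
          (netPow_le_one hρ (hF n) τ z g)
      have h2 : (∑ z ∈ Finset.univ \ ({g, w} : Finset (E → Bool)), P n x z)
          = 1 - (P n x g + P n x w) := by
        have := Finset.sum_sdiff (f := fun z => P n x z) hpair
        have hrow := netPi_row_sum hρ (F n) x
        have hp : (∑ z ∈ ({g, w} : Finset (E → Bool)), P n x z) = P n x g + P n x w :=
          Finset.sum_pair hgw
        rw [hp] at this
        rw [netPi_row_sum hρ (F n) x] at this
        linarith
      linarith
  -- main induction
  have key : ∀ τ : ℕ,
      Tendsto (fun n => (P n ^ τ) g g) atTop (nhds ((1 - r) ^ τ)) ∧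
      Tendsto (fun n => (P n ^ τ) w g) atTop (nhds 0) := by
    intro τ
    induction τ with
    | zero =>
      constructor
      · simpa [Matrix.one_apply] using (tendsto_const_nhds : Tendsto (fun _ : ℕ => (1:ℝ)) atTop _)
      · have : ∀ n : ℕ, (P n ^ 0) w g = 0 := by
          intro n; simp [Matrix.one_apply, Ne.symm hgw]
        simp only [this]
        exact tendsto_const_nhds
    | succ τ ih =>
      obtain ⟨ih1, ih2⟩ := ih
      constructor
      · -- diagonal
        have hlow : Tendsto (fun n => P n g g * (P n ^ τ) g g + P n g w * (P n ^ τ) w g)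
            atTop (nhds ((1 - r) * (1 - r) ^ τ + r * 0)) :=
          (hPgg.mul ih1).add (hPgw.mul ih2)
        have hup : Tendsto (fun n => P n g g * (P n ^ τ) g g + P n g w * (P n ^ τ) w g
              + (1 - (P n g g + P n g w)))
            atTop (nhds ((1 - r) * (1 - r) ^ τ + r * 0 + (1 - ((1 - r) + r)))) :=
          hlow.add (tendsto_const_nhds.sub (hPgg.add hPgw))
        have e1 : (1 - r) * (1 - r) ^ τ + r * 0 + (1 - ((1 - r) + r)) = (1 - r) ^ (τ + 1) := by
          ring
        have e2 : (1 - r) * (1 - r) ^ τ + r * 0 = (1 - r) ^ (τ + 1) := by ring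
        rw [e1] at hup
        rw [e2] at hlow
        exact tendsto_of_tendsto_of_tendsto_of_le_of_le hlow hup
          (fun n => (hbounds τ g n).1) (fun n => (hbounds τ g n).2)
      · -- off diagonal
        have hlow : Tendsto (fun _ : ℕ => (0:ℝ)) atTop (nhds 0) := tendsto_const_nhds
        have hup : Tendsto (fun n => P n w g * (P n ^ τ) g g + P n w w * (P n ^ τ) w g
              + (1 - (P n w g + P n w w)))
            atTop (nhds (0 * (1 - r) ^ τ + 1 * 0 + (1 - (0 + 1)))) :=
          ((hPwg.mul ih1).add (hPww.mul ih2)).add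
            (tendsto_const_nhds.sub (hPwg.add hPww))
        have e1 : (0:ℝ) * (1 - r) ^ τ + 1 * 0 + (1 - (0 + 1)) = 0 := by ring
        rw [e1] at hup
        exact tendsto_of_tendsto_of_tendsto_of_le_of_le hlow hup
          (fun n => netPow_nonneg hρ (hF n) (τ + 1) w g) (fun n => (hbounds τ w n).2)
  exact fun τ => (key τ).1
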